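/- arXiv:1507.02384 — 2 statements merged into one kernel-verified Lean document; each statement's English description precedes it below -/
import Mathlib

section
/- Let G be a finite simple bipartite graph with bipartition (A,B), let M be a maximum matching of G, and let b ∈ B. If there is an M-alternating path that starts with a non-matching edge at an M-unsaturated vertex of A and ends at b, then b belongs to every minimum vertex cover of G. -/
open SimpleGraph

/-- A vertex cover of a graph: a set of vertices containing at least one endpoint
of every edge. -/
def IsVertexCover {V : Type} (G : SimpleGraph V) (C : Set V) : Prop :=
  ∀ ⦃u v : V⦄, G.Adj u v → u ∈ C ∨ v ∈ C

/-- A minimum vertex cover: a vertex cover of smallest cardinality. -/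
def IsMinVertexCover {V : Type} (G : SimpleGraph V) (C : Set V) : Prop :=
  _root_.IsVertexCover G C ∧ ∀ C' : Set V, _root_.IsVertexCover G C' → C.ncard ≤ C'.ncard

/-- `(A, B)` is a bipartition of `G`: `A` and `B` are disjoint, cover all vertices,
and every edge joins a vertex of `A` to a vertex of `B`. -/
def IsBipartition {V : Type} (G : SimpleGraph V) (A B : Set V) : Prop :=
  Disjoint A B ∧ A ∪ B = Set.univ ∧
    ∀ ⦃u v : V⦄, G.Adj u v → (u ∈ A ∧ v ∈ B) ∨ (u ∈ B ∧ v ∈ A)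

/-- A matching of `G`: a set of edges of `G` that are pairwise vertex-disjoint. -/
def IsMatching' {V : Type} (G : SimpleGraph V) (M : Set (Sym2 V)) : Prop :=
  M ⊆ G.edgeSet ∧ ∀ e ∈ M, ∀ f ∈ M, e ≠ f → ∀ v : V, ¬ (v ∈ e ∧ v ∈ f)

/-- A maximum matching: a matching of largest cardinality. -/
def IsMaxMatching {V : Type} (G : SimpleGraph V) (M : Set (Sym2 V)) : Prop :=
  IsMatching' G M ∧ ∀ M' : Set (Sym2 V), IsMatching' G M' → M'.ncard ≤ M.ncard

/-- A vertex is `M`-saturated if it is an endpoint of some edge of `M`. -/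
def MSaturated {V : Type} (M : Set (Sym2 V)) (v : V) : Prop :=
  ∃ e ∈ M, v ∈ e

/-- A list of edges is `M`-alternating if consecutive edges alternate between
membership and non-membership in `M`. -/
def AlternatingEdges {V : Type} (M : Set (Sym2 V)) (l : List (Sym2 V)) : Prop :=
  List.Chain' (fun e f => (e ∈ M ↔ f ∉ M)) l

/-- The edge `e` lies on an `M`-alternating path starting at an `M`-unsaturated
vertex of `A`. -/
def OnAltPath {V : Type} (G : SimpleGraph V) (M : Set (Sym2 V)) (A : Set V)
    (e : Sym2 V) : Prop :=
  ∃ (a z : V) (p : G.Walk a z), a ∈ A ∧ ¬ MSaturated M a ∧ p.IsPath ∧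
    AlternatingEdges M p.edges ∧ e ∈ p.edges

/-- The `A`-König cover of `G` constructed from a maximum matching `M`: for each
edge `ab ∈ M` with `a ∈ A` and `b ∈ B`, put `b` into the cover if `ab` lies on an
`M`-alternating path starting at an `M`-unsaturated vertex of `A`, and otherwise
put `a` into the cover. -/
def koenigCoverFrom {V : Type} (G : SimpleGraph V) (M : Set (Sym2 V))
    (A B : Set V) : Set V :=
  {b | b ∈ B ∧ ∃ e ∈ M, b ∈ e ∧ OnAltPath G M A e} ∪
    {a | a ∈ A ∧ ∃ e ∈ M, a ∈ e ∧ ¬ OnAltPath G M A e}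

/-- `C` is the `A`-König cover of the bipartite graph `G` with bipartition `(A,B)`:
the unique minimum vertex cover such that every minimum vertex cover `C'`
satisfies `A ∩ C' ⊆ A ∩ C` and `B ∩ C ⊆ B ∩ C'`. -/
def IsKoenigCover {V : Type} (G : SimpleGraph V) (A B : Set V) (C : Set V) : Prop :=
  IsMinVertexCover G C ∧
    ∀ C' : Set V, IsMinVertexCover G C' → A ∩ C' ⊆ A ∩ C ∧ B ∩ C ⊆ B ∩ C'

/-- `G[S,T]`: the bipartite graph on the vertices of `G` whose edges are exactly
the edges of `G` with one endpoint in `S` and the other in `T`. -/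
def crossingGraph {V : Type} (G : SimpleGraph V) (S T : Set V) : SimpleGraph V where
  Adj u v := G.Adj u v ∧ ((u ∈ S ∧ v ∈ T) ∨ (u ∈ T ∧ v ∈ S))
  symm := ⟨fun u v h =>
    ⟨h.1.symm, h.2.elim (fun h' => Or.inr ⟨h'.2, h'.1⟩) (fun h' => Or.inl ⟨h'.2, h'.1⟩)⟩⟩
  loopless := ⟨fun u h => G.irrefl h.1⟩
namespace KoenigAux3

variable {V : Type}

lemma head_edge_mem {G : SimpleGraph V} {x z : V} (p : G.Walk x z) :
    ∀ e ∈ p.edges.head?, x ∈ e := by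
  intro e he
  cases p with
  | nil => simp at he
  | cons h q =>
    rw [Walk.edges_cons] at he
    simp only [List.head?_cons, Option.mem_some_iff] at he
    subst he; exact Sym2.mem_mk_left _ _

lemma last_edge_mem {G : SimpleGraph V} {x z : V} (p : G.Walk x z) :
    ∀ e ∈ p.edges.getLast?, z ∈ e := by
  intro e he
  have : e ∈ p.reverse.edges.head? := by
    rw [Walk.edges_reverse, List.head?_reverse]; exact he
  exact head_edge_mem p.reverse e this

lemma head_not_mem {G : SimpleGraph V} {M : Set (Sym2 V)} {x z : V}
    (hx : ¬ MSaturated M x) (p : G.Walk x z) : ∀ e ∈ p.edges.head?, e ∉ M :=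
  fun e he hem => hx ⟨e, hem, head_edge_mem p e he⟩

lemma matching_unique {G : SimpleGraph V} {M : Set (Sym2 V)} (hm : IsMatching' G M)
    {e f : Sym2 V} {v : V} (he : e ∈ M) (hf : f ∈ M) (hve : v ∈ e) (hvf : v ∈ f) :
    e = f := by
  by_contra hne
  exact hm.2 e he f hf hne v ⟨hve, hvf⟩

lemma chain'_congr_mem {α : Type*} {P Q : α → Prop} :
    ∀ (l : List α), (∀ a ∈ l, (P a ↔ Q a)) →
      List.Chain' (fun e f => (P e ↔ ¬ P f)) l →
      List.Chain' (fun e f => (Q e ↔ ¬ Q f)) l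
  | [], _, _ => List.isChain_nil
  | [_], _, _ => List.isChain_singleton _
  | a :: b :: t, h, hc => by
    unfold List.Chain' at hc ⊢
    rw [List.isChain_cons_cons] at hc ⊢
    refine ⟨?_, chain'_congr_mem (b :: t) (fun x hx => h x (List.mem_cons_of_mem _ hx)) hc.2⟩
    have ha := h a (by simp)
    have hb := h b (by simp)
    rw [← ha, ← hb]
    exact hc.1

lemma crossAB {G : SimpleGraph V} {A B : Set V} (hbip : IsBipartition G A B)
    {x y : V} (h : G.Adj x y) (hx : x ∈ A) : y ∈ B := by
  rcases hbip.2.2 h with ⟨_, hy⟩ | ⟨hx', _⟩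
  · exact hy
  · exact absurd hx' (Set.disjoint_left.mp hbip.1 hx)

lemma crossBA {G : SimpleGraph V} {A B : Set V} (hbip : IsBipartition G A B)
    {x y : V} (h : G.Adj x y) (hx : x ∈ B) : y ∈ A := by
  rcases hbip.2.2 h with ⟨hx', _⟩ | ⟨_, hy⟩
  · exact absurd hx' (Set.disjoint_right.mp hbip.1 hx)
  · exact hy

end KoenigAux3
namespace KoenigAux3

lemma par {V : Type} {G : SimpleGraph V} {A B : Set V} (hbip : IsBipartition G A B)
    {M : Set (Sym2 V)} :
    ∀ (n : ℕ) {x z : V} (p : G.Walk x z), p.length = n → x ∈ A →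
      AlternatingEdges M p.edges → (∀ e ∈ p.edges.head?, e ∉ M) →
      (∀ e ∈ p.edges.getLast?, (e ∈ M ↔ z ∈ A)) ∧
        (∀ w ∈ p.support, w ≠ x → w ∈ A → ∃ e ∈ p.edges, w ∈ e ∧ e ∈ M) := by
  intro n
  induction n using Nat.strong_induction_on with
  | _ n ih =>
    intro x z p hlen hxA halt hhead
    cases p with
    | nil =>
      constructor
      · intro e he; simp at he
      · intro w hw hne _; simp [Walk.support_nil] at hw; exact absurd hw hne
    | @cons _ y _ h₁ q =>
      have he1 : s(x, y) ∉ M := hhead _ (by simp)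
      have hyB : y ∈ B := crossAB hbip h₁ hxA
      have hyA : y ∉ A := Set.disjoint_right.mp hbip.1 hyB
      cases q with
      | nil =>
        constructor
        · intro e he
          simp only [Walk.edges_cons, Walk.edges_nil, List.getLast?_singleton,
            Option.mem_some_iff] at he
          subst he
          exact iff_of_false he1 hyA
        · intro w hw hne hwA
          simp only [Walk.support_cons, Walk.support_nil, List.mem_cons,
            List.mem_singleton, List.not_mem_nil, or_false] at hw
          rcases hw with rfl | rfl
          · exact absurd rfl hne
          · exact absurd hwA hyA
      | @cons _ w _ h₂ r =>
        have hchain : List.Chain' (fun e f => (e ∈ M ↔ f ∉ M))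
            (s(x, y) :: s(y, w) :: r.edges) := halt
        have he2 : s(y, w) ∈ M := by
          have := (List.isChain_cons_cons.mp hchain).1
          by_contra hc
          exact he1 (this.mpr hc)
        have hwA : w ∈ A := crossBA hbip h₂ hyB
        have hchain2 : List.Chain' (fun e f => (e ∈ M ↔ f ∉ M)) (s(y, w) :: r.edges) :=
          (List.isChain_cons_cons.mp hchain).2
        have hralt : AlternatingEdges M r.edges := hchain2.tail
        have hrhead : ∀ e ∈ r.edges.head?, e ∉ M := by
          intro e he
          cases hre : r.edges with
          | nil => rw [hre] at he; simp at he
          | cons a t =>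
            rw [hre] at he
            simp only [List.head?_cons, Option.mem_some_iff] at he
            subst he
            rw [hre] at hchain2
            exact (List.isChain_cons_cons.mp hchain2).1.mp he2
        have hlen' : r.length < n := by
          simp only [Walk.length_cons] at hlen; omega
        obtain ⟨ihlast, ihsupp⟩ := ih r.length hlen' r rfl hwA hralt hrhead
        constructor
        · intro e he
          cases hre : r.edges with
          | nil =>
            have hnil : r.Nil := by
              rw [Walk.nil_iff_length_eq, ← Walk.length_edges, hre]; rfl
            have hz : z = w := by
              have := r.end_mem_support
              rw [Walk.nil_iff_support_eq.mp hnil] at this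
              simpa using this
            rw [Walk.edges_cons, Walk.edges_cons, hre] at he
            simp only [List.getLast?_cons_cons, List.getLast?_singleton,
              Option.mem_some_iff] at he
            subst he
            subst hz
            exact iff_of_true he2 hwA
          | cons a t =>
            rw [Walk.edges_cons, Walk.edges_cons, hre] at he
            rw [List.getLast?_cons_cons, List.getLast?_cons_cons] at he
            exact ihlast e (by rw [hre]; exact he)
        · intro v hv hne hvA
          rw [Walk.support_cons, Walk.support_cons] at hv
          simp only [List.mem_cons] at hv
          rcases hv with rfl | rfl | hv
          · exact absurd rfl hne
          · exact absurd hvA hyA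
          · by_cases hvw : v = w
            · subst hvw
              exact ⟨s(y, v), by simp, Sym2.mem_mk_right _ _, he2⟩
            · obtain ⟨e, hep, hve, heM⟩ := ihsupp v hv hvw hvA
              exact ⟨e, by simp [hep], hve, heM⟩

end KoenigAux3
namespace KoenigAux3

lemma aug {V : Type} [Fintype V] {G : SimpleGraph V} :
    ∀ (n : ℕ) (M : Set (Sym2 V)), IsMatching' G M → ∀ {x z : V} (p : G.Walk x z),
      p.length = n → p.IsPath → x ≠ z → ¬ MSaturated M x → ¬ MSaturated M z →
      AlternatingEdges M p.edges →
      ∃ N : Set (Sym2 V), IsMatching' G N ∧ N.ncard = M.ncard + 1 := by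
  intro n
  induction n using Nat.strong_induction_on with
  | _ n ih =>
    intro M hm x z p hlen hp hxz hxU hzU halt
    cases p with
    | nil => exact absurd rfl hxz
    | @cons _ y _ h₁ q =>
      have he1 : s(x, y) ∉ M := head_not_mem hxU (Walk.cons h₁ q) s(x, y) (by simp)
      cases q with
      | nil =>
        -- single edge augmenting; note here y has been unified with z
        refine ⟨insert s(x, z) M, ⟨?_, ?_⟩, ?_⟩
        · exact Set.insert_subset (G.mem_edgeSet.mpr h₁) hm.1
        · intro e he f hf hne v ⟨hve, hvf⟩
          rcases he with rfl | he <;> rcases hf with rfl | hf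
          · exact hne rfl
          · rcases Sym2.mem_iff.mp hve with hv | hv
            · exact hxU ⟨f, hf, hv ▸ hvf⟩
            · exact hzU ⟨f, hf, hv ▸ hvf⟩
          · rcases Sym2.mem_iff.mp hvf with hv | hv
            · exact hxU ⟨e, he, hv ▸ hve⟩
            · exact hzU ⟨e, he, hv ▸ hve⟩
          · exact hm.2 e he f hf hne v ⟨hve, hvf⟩
        · exact Set.ncard_insert_of_notMem he1
      | @cons _ w _ h₂ r =>
        have hchain : List.Chain' (fun e f => (e ∈ M ↔ f ∉ M))
            (s(x, y) :: s(y, w) :: r.edges) := halt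
        have he2 : s(y, w) ∈ M := by
          have := (List.isChain_cons_cons.mp hchain).1
          by_contra hc
          exact he1 (this.mpr hc)
        by_cases hwz : w = z
        · subst hwz
          exact absurd ⟨s(y, w), he2, Sym2.mem_mk_right _ _⟩ hzU
        · set M₂ : Set (Sym2 V) := insert s(x, y) (M \ {s(y, w)}) with hM₂
          have hxsat : ∀ e ∈ M, x ∉ e := fun e he hx => hxU ⟨e, he, hx⟩
          have hm₂ : IsMatching' G M₂ := by
            constructor
            · refine Set.insert_subset (G.mem_edgeSet.mpr h₁) ?_
              exact (Set.diff_subset).trans hm.1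
            · intro e he f hf hne v ⟨hve, hvf⟩
              rcases he with rfl | ⟨heM, hene⟩ <;> rcases hf with rfl | ⟨hfM, hfne⟩
              · exact hne rfl
              · rcases Sym2.mem_iff.mp hve with hv | hv
                · exact hxsat f hfM (hv ▸ hvf)
                · have : f = s(y, w) :=
                    matching_unique hm hfM he2 (hv ▸ hvf) (Sym2.mem_mk_left _ _)
                  exact hfne (by simpa using this)
              · rcases Sym2.mem_iff.mp hvf with hv | hv
                · exact hxsat e heM (hv ▸ hve)
                · have : e = s(y, w) :=
                    matching_unique hm heM he2 (hv ▸ hve) (Sym2.mem_mk_left _ _)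
                  exact hene (by simpa using this)
              · exact hm.2 e heM f hfM hne v ⟨hve, hvf⟩
          have hcard₂ : M₂.ncard = M.ncard := by
            rw [hM₂, Set.ncard_insert_of_notMem (by simp [he1])]
            exact Set.ncard_diff_singleton_add_one he2
          have hwU₂ : ¬ MSaturated M₂ w := by
            rintro ⟨e, he, hwe⟩
            rcases he with rfl | ⟨heM, hene⟩
            · rcases Sym2.mem_iff.mp hwe with hv | hv
              · exact hxU ⟨s(y, w), he2, hv ▸ Sym2.mem_mk_right _ _⟩
              · exact h₂.ne hv.symm
            · have : e = s(y, w) :=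
                matching_unique hm heM he2 hwe (Sym2.mem_mk_right _ _)
              exact hene (by simpa using this)
          have hzU₂ : ¬ MSaturated M₂ z := by
            rintro ⟨e, he, hze⟩
            rcases he with rfl | ⟨heM, _⟩
            · rcases Sym2.mem_iff.mp hze with hv | hv
              · exact hxz hv.symm
              · -- z = y : contradicts nodup support
                have hnd := hp.2
                simp only [Walk.support_cons] at hnd
                have hzr : z ∈ r.support := r.end_mem_support
                exact (hnd.of_cons).notMem (by simpa [← hv] using hzr)
            · exact hzU ⟨e, heM, hze⟩
          have hedges_nd : (s(x, y) :: s(y, w) :: r.edges).Nodup := by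
            have := hp.1.1
            simpa using this
          have hmem_eq : ∀ e ∈ r.edges, (e ∈ M ↔ e ∈ M₂) := by
            intro e he
            have hne1 : e ≠ s(x, y) := by
              intro h; subst h
              exact (hedges_nd.notMem) (by simp [he])
            have hne2 : e ≠ s(y, w) := by
              intro h; subst h
              exact ((hedges_nd.of_cons).notMem) he
            simp [hM₂, hne1, hne2]
          have hralt : AlternatingEdges M₂ r.edges := by
            have hr : List.Chain' (fun e f => (e ∈ M ↔ f ∉ M)) r.edges :=
              ((List.isChain_cons_cons.mp hchain).2).tail
            exact chain'_congr_mem (P := (· ∈ M)) (Q := (· ∈ M₂)) r.edges hmem_eq hr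
          have hlen' : r.length < n := by
            simp only [Walk.length_cons] at hlen; omega
          obtain ⟨N, hN, hNcard⟩ :=
            ih r.length hlen' M₂ hm₂ r rfl (hp.of_cons.of_cons) hwz hwU₂ hzU₂ hralt
          exact ⟨N, hN, by rw [hNcard, hcard₂]⟩

end KoenigAux3
namespace KoenigAux3

lemma key {V : Type} [Fintype V] {G : SimpleGraph V} {A B : Set V}
    (hbip : IsBipartition G A B) {M : Set (Sym2 V)} (hM : IsMaxMatching G M)
    {a v : V} (p : G.Walk a v) (haA : a ∈ A) (haU : ¬ MSaturated M a)
    (hp : p.IsPath) (halt : AlternatingEdges M p.edges) (hvB : v ∈ B) :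
    ∃ g ∈ M, v ∈ g ∧ OnAltPath G M A g := by
  have hhead := head_not_mem haU p
  have hpar := par hbip p.length p rfl haA halt hhead
  have hvA : v ∉ A := Set.disjoint_right.mp hbip.1 hvB
  have hlast : ∀ e ∈ p.edges.getLast?, e ∉ M := fun e he hem => hvA ((hpar.1 e he).mp hem)
  by_cases hsat : MSaturated M v
  · obtain ⟨g, hgM, hvg⟩ := hsat
    obtain ⟨w, rfl⟩ : ∃ w, g = s(v, w) := Sym2.mem_iff_exists.mp hvg
    have hadj : G.Adj v w := G.mem_edgeSet.mp (hM.1.1 hgM)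
    have hwA : w ∈ A := crossBA hbip hadj hvB
    by_cases hws : w ∈ p.support
    · have hwa : w ≠ a := fun h => haU ⟨s(v, w), hgM, h ▸ Sym2.mem_mk_right _ _⟩
      obtain ⟨e, hep, hwe, heM⟩ := hpar.2 w hws hwa hwA
      have heg : e = s(v, w) :=
        matching_unique hM.1 heM hgM hwe (Sym2.mem_mk_right _ _)
      exact ⟨s(v, w), hgM, hvg, a, v, p, haA, haU, hp, halt, heg ▸ hep⟩
    · refine ⟨s(v, w), hgM, hvg, a, w, p.concat hadj, haA, haU, ?_, ?_, ?_⟩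
      · rw [Walk.isPath_def, Walk.support_concat]
        simp only [List.concat_eq_append, List.nodup_append]
        exact ⟨hp.2, List.nodup_singleton _, by simpa using fun a ha (haw : a = w) => hws (haw ▸ ha)⟩
      · show List.Chain' _ _
        rw [Walk.edges_concat, List.concat_eq_append]
        refine List.IsChain.append halt (List.isChain_singleton _) ?_
        intro e he f hf
        simp only [List.head?_cons, Option.mem_some_iff] at hf
        subst hf
        exact iff_of_false (hlast e he) (not_not.mpr hgM)
      · rw [Walk.edges_concat]; simp
  · exfalso
    have hav : a ≠ v := fun h => hvA (h ▸ haA)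
    obtain ⟨N, hN, hNcard⟩ := aug p.length M hM.1 p rfl hp hav haU hsat halt
    have := hM.2 N hN
    omega

end KoenigAux3
namespace KoenigAux3

lemma mem_kcover_left {V : Type} {G : SimpleGraph V} {M : Set (Sym2 V)} {A B : Set V}
    {v : V} (hvB : v ∈ B) (h : ∃ g ∈ M, v ∈ g ∧ OnAltPath G M A g) :
    v ∈ koenigCoverFrom G M A B := by
  obtain ⟨g, hgM, hvg, hog⟩ := h
  exact Or.inl ⟨hvB, g, hgM, hvg, hog⟩

lemma kcover_isCover {V : Type} [Fintype V] [DecidableEq V] {G : SimpleGraph V} {A B : Set V}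
    (hbip : IsBipartition G A B) {M : Set (Sym2 V)} (hM : IsMaxMatching G M) :
    _root_.IsVertexCover G (koenigCoverFrom G M A B) := by
  have main : ∀ u v : V, G.Adj u v → u ∈ A → v ∈ B →
      u ∈ koenigCoverFrom G M A B ∨ v ∈ koenigCoverFrom G M A B := by
    intro u v hadj huA hvB
    by_cases husat : MSaturated M u
    · obtain ⟨f, hfM, huf⟩ := husat
      by_cases hof : OnAltPath G M A f
      · by_cases heM : s(u, v) ∈ M
        · have : s(u, v) = f :=
            matching_unique hM.1 heM hfM (Sym2.mem_mk_left _ _) huf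
          right
          exact Or.inl ⟨hvB, f, hfM, this ▸ Sym2.mem_mk_right u v, hof⟩
        · obtain ⟨a, z, p, haA, haU, hp, halt, hfp⟩ := hof
          by_cases hvs : v ∈ p.support
          · right
            refine mem_kcover_left hvB ?_
            have hqalt : AlternatingEdges M (p.takeUntil v hvs).edges := by
              refine List.IsChain.prefix halt ?_
              exact ⟨(p.dropUntil v hvs).edges, by rw [← Walk.edges_append, Walk.take_spec]⟩
            exact key hbip hM (p.takeUntil v hvs) haA haU (hp.takeUntil hvs) hqalt hvB
          · -- v not on p, but u is
            have hup : u ∈ p.support := by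
              obtain ⟨u', rfl⟩ : ∃ u', f = s(u, u') := Sym2.mem_iff_exists.mp huf
              exact Walk.fst_mem_support_of_mem_edges p hfp
            set q := p.takeUntil u hup with hq
            have hqalt : AlternatingEdges M q.edges := by
              refine List.IsChain.prefix halt ?_
              exact ⟨(p.dropUntil u hup).edges, by rw [← Walk.edges_append, Walk.take_spec]⟩
            have hqpath : q.IsPath := hp.takeUntil hup
            have hqhead := head_not_mem haU q
            have hqpar := par hbip q.length q rfl haA hqalt hqhead
            have hqlast : ∀ e ∈ q.edges.getLast?, e ∈ M := fun e he => (hqpar.1 e he).mpr huA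
            have hvq : v ∉ q.support := fun h => hvs (p.support_takeUntil_subset hup h)
            right
            refine mem_kcover_left hvB ?_
            refine key hbip hM (q.concat hadj) haA haU ?_ ?_ hvB
            · rw [Walk.isPath_def, Walk.support_concat]
              simp only [List.concat_eq_append, List.nodup_append]
              exact ⟨hqpath.2, List.nodup_singleton _, by simpa using fun a ha (haw : a = v) => hvq (haw ▸ ha)⟩
            · show List.Chain' _ _
              rw [Walk.edges_concat, List.concat_eq_append]
              refine List.IsChain.append hqalt (List.isChain_singleton _) ?_
              intro e he f' hf'
              simp only [List.head?_cons, Option.mem_some_iff] at hf'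
              subst hf'
              exact iff_of_true (hqlast e he) heM
      · left
        exact Or.inr ⟨huA, f, hfM, huf, hof⟩
    · right
      refine mem_kcover_left hvB ?_
      refine key hbip hM (Walk.cons hadj Walk.nil) huA husat ?_ ?_ hvB
      · rw [Walk.isPath_def]
        simp [hadj.ne]
      · show List.Chain' _ _
        exact List.isChain_singleton _
  intro u v hadj
  rcases hbip.2.2 hadj with ⟨huA, hvB⟩ | ⟨huB, hvA⟩
  · exact main u v hadj huA hvB
  · exact (main v u hadj.symm hvA huB).symm

lemma kcover_card_le {V : Type} [Fintype V] {G : SimpleGraph V} {A B : Set V}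
    (hbip : IsBipartition G A B) {M : Set (Sym2 V)} (hm : IsMatching' G M) :
    (koenigCoverFrom G M A B).ncard ≤ M.ncard := by
  have hx : ∀ k ∈ koenigCoverFrom G M A B,
      ∃ e, e ∈ M ∧ k ∈ e ∧ (OnAltPath G M A e ↔ k ∈ B) := by
    intro k hk
    rcases hk with ⟨hkB, e, heM, hke, hoe⟩ | ⟨hkA, e, heM, hke, hoe⟩
    · exact ⟨e, heM, hke, iff_of_true hoe hkB⟩
    · exact ⟨e, heM, hke, iff_of_false hoe (Set.disjoint_left.mp hbip.1 hkA)⟩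
  rcases Set.eq_empty_or_nonempty (koenigCoverFrom G M A B) with hK | ⟨k0, hk0⟩
  · simp [hK]
  obtain ⟨e0, -⟩ := hx k0 hk0
  haveI : Nonempty (Sym2 V) := ⟨e0⟩
  choose! φ h1 h2 h3 using hx
  refine Set.ncard_le_ncard_of_injOn φ (fun k hk => h1 k hk) ?_ (Set.toFinite M)
  intro k₁ hk₁ k₂ hk₂ heq
  by_contra hne
  have hk₁e : k₁ ∈ φ k₁ := h2 k₁ hk₁
  have hk₂e : k₂ ∈ φ k₁ := heq ▸ h2 k₂ hk₂
  have hedge : φ k₁ = s(k₁, k₂) := (Sym2.mem_and_mem_iff hne).mp ⟨hk₁e, hk₂e⟩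
  have hadj : G.Adj k₁ k₂ := G.mem_edgeSet.mp (hm.1 (hedge ▸ h1 k₁ hk₁))
  have h3₁ := h3 k₁ hk₁
  have h3₂ := h3 k₂ hk₂
  rw [heq] at h3₁
  rcases hbip.2.2 hadj with ⟨h1A, h2B⟩ | ⟨h1B, h2A⟩
  · exact Set.disjoint_left.mp hbip.1 h1A (h3₁.mp (h3₂.mpr h2B))
  · exact Set.disjoint_left.mp hbip.1 h2A (h3₂.mp (h3₁.mpr h1B))

end KoenigAux3
namespace KoenigAux3

lemma cover_struct {V : Type} [Fintype V] {G : SimpleGraph V} {M : Set (Sym2 V)}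
    (hm : IsMatching' G M) {C : Set V} (hC : _root_.IsVertexCover G C)
    (hcard : C.ncard ≤ M.ncard) :
    (∀ c ∈ C, MSaturated M c) ∧
      (∀ e ∈ M, ∀ x y : V, x ∈ e → y ∈ e → x ≠ y → x ∈ C → y ∉ C) := by
  have hx : ∀ e ∈ M, ∃ x, x ∈ e ∧ x ∈ C := by
    intro e heM
    induction e with
    | _ x y =>
      have hadj : G.Adj x y := G.mem_edgeSet.mp (hm.1 heM)
      rcases hC hadj with h | h
      · exact ⟨x, Sym2.mem_mk_left _ _, h⟩
      · exact ⟨y, Sym2.mem_mk_right _ _, h⟩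
  rcases Set.eq_empty_or_nonempty M with hM0 | ⟨f0, hf0⟩
  · have hC0 : C = ∅ := by
      rw [hM0] at hcard
      have h0 : C.ncard = 0 := by simpa using hcard
      exact (Set.ncard_eq_zero (Set.toFinite C)).mp h0
    constructor
    · intro c hc; rw [hC0] at hc; exact absurd hc (Set.notMem_empty c)
    · intro e heM; rw [hM0] at heM; exact absurd heM (Set.notMem_empty e)
  obtain ⟨x0, -, -⟩ := hx f0 hf0
  haveI : Nonempty V := ⟨x0⟩
  choose! φ h1 h2 using hx
  have hinj : Set.InjOn φ M := by
    intro e he f hf heq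
    exact matching_unique hm he hf (h1 e he) (heq ▸ h1 f hf)
  have himgsub : φ '' M ⊆ C := by
    rintro - ⟨e, heM, rfl⟩
    exact h2 e heM
  have himg : φ '' M = C := by
    refine Set.eq_of_subset_of_ncard_le himgsub ?_ (Set.toFinite _)
    rw [Set.ncard_image_of_injOn hinj]
    exact hcard
  constructor
  · intro c hc
    rw [← himg] at hc
    obtain ⟨e, heM, rfl⟩ := hc
    exact ⟨e, heM, h1 e heM⟩
  · intro e heM x y hxe hye hne hxC hyC
    rw [← himg] at hxC hyC
    obtain ⟨e₁, he₁, hφ₁⟩ := hxC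
    obtain ⟨e₂, he₂, hφ₂⟩ := hyC
    have : e₁ = e := matching_unique hm he₁ heM (hφ₁ ▸ h1 e₁ he₁) hxe
    have h₂e : e₂ = e := matching_unique hm he₂ heM (hφ₂ ▸ h1 e₂ he₂) hye
    exact hne ((hφ₁.symm.trans (by rw [this, ← h₂e])).trans hφ₂)

lemma along {V : Type} {G : SimpleGraph V} {A B : Set V} (hbip : IsBipartition G A B)
    {M : Set (Sym2 V)} {C : Set V} (hC : _root_.IsVertexCover G C)
    (hone : ∀ e ∈ M, ∀ x y : V, x ∈ e → y ∈ e → x ≠ y → x ∈ C → y ∉ C)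
    {b : V} (hbB : b ∈ B) :
    ∀ (n : ℕ) {x : V} (p : G.Walk x b), p.length = n → x ∈ A → x ∉ C →
      AlternatingEdges M p.edges → (∀ e ∈ p.edges.head?, e ∉ M) → b ∈ C := by
  intro n
  induction n using Nat.strong_induction_on with
  | _ n ih =>
    intro x p hlen hxA hxC halt hhead
    cases p with
    | nil => exact absurd hxA (Set.disjoint_right.mp hbip.1 hbB)
    | @cons _ y _ h₁ q =>
      have hyC : y ∈ C := (hC h₁).resolve_left hxC
      cases q with
      | nil => exact hyC
      | @cons _ w _ h₂ r =>
        have he1 : s(x, y) ∉ M := hhead _ (by simp)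
        have hchain : List.Chain' (fun e f => (e ∈ M ↔ f ∉ M))
            (s(x, y) :: s(y, w) :: r.edges) := halt
        have he2 : s(y, w) ∈ M := by
          have := (List.isChain_cons_cons.mp hchain).1
          by_contra hc
          exact he1 (this.mpr hc)
        have hwC : w ∉ C :=
          hone s(y, w) he2 y w (Sym2.mem_mk_left _ _) (Sym2.mem_mk_right _ _) h₂.ne hyC
        have hyB : y ∈ B := crossAB hbip h₁ hxA
        have hwA : w ∈ A := crossBA hbip h₂ hyB
        have hchain2 : List.Chain' (fun e f => (e ∈ M ↔ f ∉ M)) (s(y, w) :: r.edges) :=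
          (List.isChain_cons_cons.mp hchain).2
        have hrhead : ∀ e ∈ r.edges.head?, e ∉ M := by
          intro e he
          cases hre : r.edges with
          | nil => rw [hre] at he; simp at he
          | cons a t =>
            rw [hre] at he
            simp only [List.head?_cons, Option.mem_some_iff] at he
            subst he
            rw [hre] at hchain2
            exact (List.isChain_cons_cons.mp hchain2).1.mp he2
        have hlen' : r.length < n := by
          simp only [Walk.length_cons] at hlen; omega
        exact ih r.length hlen' r rfl hwA hwC hchain2.tail hrhead

end KoenigAux3

/-- If there is an `M`-alternating path that starts with a
non-matching edge at an `M`-unsaturated vertex of `A` and ends at `b ∈ B`, then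
`b` belongs to every minimum vertex cover of `G`. -/
theorem mem_minVertexCover_of_altPath {V : Type} [Fintype V] (G : SimpleGraph V)
    (A B : Set V) (hbip : IsBipartition G A B)
    (M : Set (Sym2 V)) (hM : IsMaxMatching G M)
    (b : V) (hb : b ∈ B)
    (hpath : ∃ (a : V) (p : G.Walk a b), a ∈ A ∧ ¬ MSaturated M a ∧
      p.IsPath ∧ AlternatingEdges M p.edges ∧
      ∃ e ∈ p.edges.head?, e ∉ M) :
    ∀ C : Set V, IsMinVertexCover G C → b ∈ C := by
  classical
  obtain ⟨a, p, haA, haU, hp, halt, -⟩ := hpath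
  intro C hC
  have hKc := KoenigAux3.kcover_isCover hbip hM
  have hKle := KoenigAux3.kcover_card_le hbip hM.1
  have hCle : C.ncard ≤ (koenigCoverFrom G M A B).ncard := hC.2 _ hKc
  obtain ⟨hsatC, hone⟩ := KoenigAux3.cover_struct hM.1 hC.1 (hCle.trans hKle)
  have haC : a ∉ C := fun h => haU (hsatC a h)
  exact KoenigAux3.along hbip hC.1 hone hb p.length p rfl haA haC halt
    (KoenigAux3.head_not_mem haU p)
end

section
/- Let G be a finite simple graph and let (A,B,X) be a partition of V(G) into three pairwise disjoint (possibly empty) sets. Let C_A be the A-König cover of the bipartite graph G[A, B ∪ X], and let C be any minimum vertex cover of the bipartite graph G[A ∪ X, B]. Then A ∩ C ⊆ A ∩ C_A. -/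
open SimpleGraph

/-- Auxiliary: vertices of `A ∩ C \ D` reachable from `a` by alternating through
`B`-vertices not in `C`. -/
inductive ReachA {V : Type} (G : SimpleGraph V) (A B C D : Set V) (a : V) : V → Prop
  | base : ReachA G A B C D a a
  | step {t b a' : V} : ReachA G A B C D a t → b ∈ B → b ∉ C → G.Adj t b →
      a' ∈ A → a' ∈ C → a' ∉ D → G.Adj a' b → ReachA G A B C D a a'

theorem reachA_mem {V : Type} {G : SimpleGraph V} {A B C D : Set V} {a v : V}
    (haA : a ∈ A) (haC : a ∈ C) (haD : a ∉ D)
    (h : ReachA G A B C D a v) : v ∈ A ∧ v ∈ C ∧ v ∉ D := by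
  induction h with
  | base => exact ⟨haA, haC, haD⟩
  | step _ _ _ _ h4 h5 h6 _ _ => exact ⟨h4, h5, h6⟩

/-- For a tripartition `(A,B,X)` of the vertices of `G`, the
`A`-König cover `C_A` of `G[A, B ∪ X]` and any minimum vertex cover `C` of
`G[A ∪ X, B]` satisfy `A ∩ C ⊆ A ∩ C_A`. -/
theorem inter_A_subset_koenig {V : Type} [Fintype V] (G : SimpleGraph V)
    (A B X : Set V)
    (hAB : Disjoint A B) (hAX : Disjoint A X) (hBX : Disjoint B X)
    (hU : A ∪ B ∪ X = Set.univ)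
    (CA : Set V) (hCA : IsKoenigCover (crossingGraph G A (B ∪ X)) A (B ∪ X) CA)
    (C : Set V) (hC : IsMinVertexCover (crossingGraph G (A ∪ X) B) C) :
    A ∩ C ⊆ A ∩ CA := by
  intro a ha
  obtain ⟨haA, haC⟩ := ha
  refine ⟨haA, ?_⟩
  set G1 := crossingGraph G A (B ∪ X) with hG1
  set G2 := crossingGraph G (A ∪ X) B with hG2
  -- obtain a minimum vertex cover D of G1
  have hne : (Set.univ : Set ℕ) ≠ ∅ := by simp
  have hSne : {n : ℕ | ∃ D : Set V, _root_.IsVertexCover G1 D ∧ D.ncard = n}.Nonempty :=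
    ⟨(Set.univ : Set V).ncard, Set.univ, fun u v _ => Or.inl trivial, rfl⟩
  obtain ⟨D, hDcov, hDn⟩ := Nat.sInf_mem hSne
  have hDmin : ∀ C' : Set V, _root_.IsVertexCover G1 C' → D.ncard ≤ C'.ncard := by
    intro C' hC'
    rw [hDn]
    exact Nat.sInf_le ⟨C', hC', rfl⟩
  -- suffices: a lies in some minimum vertex cover of G1
  suffices h : ∃ D1 : Set V, IsMinVertexCover G1 D1 ∧ a ∈ D1 by
    obtain ⟨D1, hD1, haD1⟩ := h
    exact ((hCA.2 D1 hD1).1 ⟨haA, haD1⟩).2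
  by_cases haD : a ∈ D
  · exact ⟨D, ⟨hDcov, hDmin⟩, haD⟩
  -- main case : a ∉ D; perform the alternating swap
  set T : Set V := {v | ReachA G A B C D a v} with hT
  set NBC : Set V := {b | b ∈ B ∧ b ∉ C ∧ ∃ t ∈ T, G.Adj t b} with hNBC
  have hTmem : ∀ v ∈ T, v ∈ A ∧ v ∈ C ∧ v ∉ D := fun v hv => reachA_mem haA haC haD hv
  have hTA : T ⊆ A := fun v hv => (hTmem v hv).1
  have hTC : T ⊆ C := fun v hv => (hTmem v hv).2.1
  have hTD : ∀ v ∈ T, v ∉ D := fun v hv => (hTmem v hv).2.2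
  have hNBCB : NBC ⊆ B := fun b hb => hb.1
  have hNBCD : NBC ⊆ D := by
    intro b hb
    obtain ⟨hbB, hbC, t, htT, hadj⟩ := hb
    have hG1adj : G1.Adj t b := ⟨hadj, Or.inl ⟨hTA htT, Or.inl hbB⟩⟩
    rcases hDcov hG1adj with h | h
    · exact absurd h (hTD t htT)
    · exact h
  -- C1 covers G2
  set C1 : Set V := (C \ T) ∪ NBC with hC1
  have hC1key : ∀ u v : V, G.Adj u v → u ∈ A ∪ X → v ∈ B → u ∈ C1 ∨ v ∈ C1 := by
    intro u v hadj huAX hvB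
    have hG2adj : G2.Adj u v := ⟨hadj, Or.inl ⟨huAX, hvB⟩⟩
    rcases hC.1 hG2adj with h | h
    · by_cases huT : u ∈ T
      · by_cases hvC : v ∈ C
        · refine Or.inr (Or.inl ⟨hvC, fun hvT => ?_⟩)
          exact (hAB.le_bot ⟨hTA hvT, hvB⟩).elim
        · exact Or.inr (Or.inr ⟨hvB, hvC, u, huT, hadj⟩)
      · exact Or.inl (Or.inl ⟨h, huT⟩)
    · refine Or.inr (Or.inl ⟨h, fun hvT => ?_⟩)
      exact (hAB.le_bot ⟨hTA hvT, hvB⟩).elim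
  have hC1cov : _root_.IsVertexCover G2 C1 := by
    intro u v huv
    obtain ⟨hadj, hor⟩ := huv
    rcases hor with ⟨h1, h2⟩ | ⟨h1, h2⟩
    · exact hC1key u v hadj h1 h2
    · exact (hC1key v u hadj.symm h2 h1).symm
  -- D1 covers G1
  set D1 : Set V := (D \ NBC) ∪ T with hD1
  have hD1key : ∀ u v : V, G.Adj u v → u ∈ A → v ∈ B ∪ X → u ∈ D1 ∨ v ∈ D1 := by
    intro u v hadj huA hvBX
    by_cases huT : u ∈ T
    · exact Or.inl (Or.inr huT)
    by_cases huD : u ∈ D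
    · refine Or.inl (Or.inl ⟨huD, fun huN => ?_⟩)
      exact (hAB.le_bot ⟨huA, hNBCB huN⟩).elim
    have hG1adj : G1.Adj u v := ⟨hadj, Or.inl ⟨huA, hvBX⟩⟩
    rcases hDcov hG1adj with h | h
    · exact absurd h huD
    by_cases hvN : v ∈ NBC
    · -- then u must be in C, hence reachable : contradiction
      obtain ⟨hvB, hvC, t, htT, htadj⟩ := hvN
      have hG2adj : G2.Adj u v := ⟨hadj, Or.inl ⟨Or.inl huA, hvB⟩⟩
      rcases hC.1 hG2adj with h' | h'
      · exact absurd (ReachA.step htT hvB hvC htadj huA h' huD hadj) huT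
      · exact absurd h' hvC
    · exact Or.inr (Or.inl ⟨h, hvN⟩)
  have hD1cov : _root_.IsVertexCover G1 D1 := by
    intro u v huv
    obtain ⟨hadj, hor⟩ := huv
    rcases hor with ⟨h1, h2⟩ | ⟨h1, h2⟩
    · exact hD1key u v hadj h1 h2
    · exact (hD1key v u hadj.symm h2 h1).symm
  -- cardinality bookkeeping
  have hCsplit : (C \ T).ncard + T.ncard = C.ncard :=
    Set.ncard_diff_add_ncard_of_subset hTC
  have hDsplit : (D \ NBC).ncard + NBC.ncard = D.ncard :=
    Set.ncard_diff_add_ncard_of_subset hNBCD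
  have hC1le : C1.ncard ≤ (C \ T).ncard + NBC.ncard := Set.ncard_union_le _ _
  have hCle : C.ncard ≤ C1.ncard := hC.2 C1 hC1cov
  have hTle : T.ncard ≤ NBC.ncard := by omega
  have hD1le : D1.ncard ≤ (D \ NBC).ncard + T.ncard := Set.ncard_union_le _ _
  have hD1leD : D1.ncard ≤ D.ncard := by omega
  refine ⟨D1, ⟨hD1cov, fun C' hC' => le_trans hD1leD (hDmin C' hC')⟩, Or.inr ReachA.base⟩
end
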